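/- arXiv:2412.11301 — 2 statements merged into one kernel-verified Lean document; each statement's English description precedes it below -/
import Mathlib

section
/- Let N : ℝ^d × ℝ^k → ℝ^d be a differentiable time-step map and define u_{n+1} = N(u_n, p) for n = 0,…,N-1 from u_0, and let ℓ(p) = Φ(u_N(p)) with Φ differentiable. Define λ_N = (∇Φ)(u_N), μ_N = 0, and recursively λ_n = (∂_u N(u_n,p))ᵀ λ_{n+1}, μ_n = (∂_p N(u_n,p))ᵀ λ_{n+1} + μ_{n+1} for n = N-1,…,0. Then ∇_p ℓ = μ_0. -/
open Matrix

/-- Correctness of the discrete adjoint recursion for a general time-stepping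
algorithm `u_{n+1} = N(u_n, p)`: the backward-propagated adjoint variables
`λ` (state sensitivity) and `μ` (accumulated parameter gradient) yield the
exact gradient of the loss `ℓ(p) = Φ(u_N)` with respect to `p`. -/
theorem discrete_adjoint_gradient
    (d k NN : ℕ)
    (Nmap : (Fin d → ℝ) → (Fin k → ℝ) → (Fin d → ℝ))
    (hNmap : Differentiable ℝ (fun q : (Fin d → ℝ) × (Fin k → ℝ) => Nmap q.1 q.2))
    (Φ : (Fin d → ℝ) → ℝ) (hΦ : Differentiable ℝ Φ)
    (u0 : Fin d → ℝ)
    (seq : (Fin k → ℝ) → ℕ → (Fin d → ℝ))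
    (hseq0 : ∀ p, seq p 0 = u0)
    (hseqS : ∀ p n, seq p (n + 1) = Nmap (seq p n) p)
    (p₀ : Fin k → ℝ)
    (lam : ℕ → (Fin d → ℝ)) (mu : ℕ → (Fin k → ℝ))
    (hlamN : ∀ v : Fin d → ℝ, fderiv ℝ Φ (seq p₀ NN) v = dotProduct (lam NN) v)
    (hmuN : mu NN = 0)
    (hlam : ∀ n, n < NN → ∀ v : Fin d → ℝ,
      dotProduct (lam n) v
        = dotProduct (lam (n + 1)) (fderiv ℝ (fun x => Nmap x p₀) (seq p₀ n) v))
    (hmu : ∀ n, n < NN → ∀ w : Fin k → ℝ,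
      dotProduct (mu n) w
        = dotProduct (lam (n + 1)) (fderiv ℝ (fun q => Nmap (seq p₀ n) q) p₀ w)
          + dotProduct (mu (n + 1)) w) :
    ∀ w : Fin k → ℝ,
      fderiv ℝ (fun p => Φ (seq p NN)) p₀ w = dotProduct (mu 0) w := by
  intro w
  set N' : (Fin d → ℝ) × (Fin k → ℝ) → (Fin d → ℝ) := fun q => Nmap q.1 q.2 with hN'
  -- differentiability of p ↦ seq p n
  have hdiff : ∀ n, Differentiable ℝ (fun p => seq p n) := by
    intro n
    induction n with
    | zero => simp only [hseq0]; exact differentiable_const u0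
    | succ n ih =>
        have : (fun p => seq p (n + 1)) = fun p => N' (seq p n, p) := by
          funext p; simp [hseqS, hN']
        rw [this]
        exact hNmap.comp (Differentiable.prodMk ih differentiable_id)
  -- partial derivatives as slices of the total derivative
  have hpart1 : ∀ (a : Fin d → ℝ) (b : Fin k → ℝ) (v : Fin d → ℝ),
      fderiv ℝ (fun x => Nmap x b) a v = fderiv ℝ N' (a, b) (v, 0) := by
    intro a b v
    have h1 : HasFDerivAt (fun x : Fin d → ℝ => (x, b))
        ((ContinuousLinearMap.id ℝ (Fin d → ℝ)).prod 0) a :=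
      HasFDerivAt.prodMk (hasFDerivAt_id a) (hasFDerivAt_const b a)
    have h2 : HasFDerivAt (fun x => N' (x, b))
        ((fderiv ℝ N' (a, b)).comp ((ContinuousLinearMap.id ℝ (Fin d → ℝ)).prod 0)) a :=
      HasFDerivAt.comp (f := fun x => (x, b)) a (hNmap (a, b)).hasFDerivAt h1
    have h3 : fderiv ℝ (fun x => Nmap x b) a
        = (fderiv ℝ N' (a, b)).comp ((ContinuousLinearMap.id ℝ (Fin d → ℝ)).prod 0) := h2.fderiv
    rw [h3]; rfl
  have hpart2 : ∀ (a : Fin d → ℝ) (b : Fin k → ℝ) (ww : Fin k → ℝ),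
      fderiv ℝ (fun q => Nmap a q) b ww = fderiv ℝ N' (a, b) (0, ww) := by
    intro a b ww
    have h1 : HasFDerivAt (fun q : Fin k → ℝ => (a, q))
        ((0 : (Fin k → ℝ) →L[ℝ] (Fin d → ℝ)).prod (ContinuousLinearMap.id ℝ (Fin k → ℝ))) b :=
      HasFDerivAt.prodMk (hasFDerivAt_const a b) (hasFDerivAt_id b)
    have h2 : HasFDerivAt (fun q => N' (a, q))
        ((fderiv ℝ N' (a, b)).comp
          ((0 : (Fin k → ℝ) →L[ℝ] (Fin d → ℝ)).prod (ContinuousLinearMap.id ℝ (Fin k → ℝ)))) b :=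
      HasFDerivAt.comp (f := fun q => (a, q)) b (hNmap (a, b)).hasFDerivAt h1
    have h3 : fderiv ℝ (fun q => Nmap a q) b
        = (fderiv ℝ N' (a, b)).comp
          ((0 : (Fin k → ℝ) →L[ℝ] (Fin d → ℝ)).prod (ContinuousLinearMap.id ℝ (Fin k → ℝ))) := h2.fderiv
    rw [h3]; rfl
  -- the main downward induction
  have key : ∀ j n, n + j = NN →
      fderiv ℝ (fun p => Φ (seq p NN)) p₀ w
        = dotProduct (lam n) (fderiv ℝ (fun p => seq p n) p₀ w) + dotProduct (mu n) w := by
    intro j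
    induction j with
    | zero =>
        intro n hn
        simp only [Nat.add_zero] at hn
        rw [hn]
        have hc : fderiv ℝ (fun p => Φ (seq p NN)) p₀
            = (fderiv ℝ Φ (seq p₀ NN)).comp (fderiv ℝ (fun p => seq p NN) p₀) :=
          fderiv_comp p₀ (hΦ _) ((hdiff NN) p₀)
        rw [hc, hmuN]
        simp [hlamN]
    | succ j ih =>
        intro n hn
        have hn' : (n + 1) + j = NN := by omega
        have hlt : n < NN := by omega
        have h1 := ih (n + 1) hn'
        -- compute fderiv of p ↦ seq p (n+1)
        have heq : (fun p => seq p (n + 1)) = fun p => N' (seq p n, p) := by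
          funext p; simp [hseqS, hN']
        have hinner : HasFDerivAt (fun p : Fin k → ℝ => (seq p n, p))
            ((fderiv ℝ (fun p => seq p n) p₀).prod (ContinuousLinearMap.id ℝ (Fin k → ℝ))) p₀ :=
          HasFDerivAt.prodMk ((hdiff n) p₀).hasFDerivAt (hasFDerivAt_id p₀)
        have hcomp : HasFDerivAt (fun p => N' (seq p n, p))
            ((fderiv ℝ N' (seq p₀ n, p₀)).comp
              ((fderiv ℝ (fun p => seq p n) p₀).prod (ContinuousLinearMap.id ℝ (Fin k → ℝ)))) p₀ :=
          HasFDerivAt.comp (f := fun p => (seq p n, p)) p₀ (hNmap (seq p₀ n, p₀)).hasFDerivAt hinner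
        have hD : fderiv ℝ (fun p => seq p (n + 1)) p₀ w
            = fderiv ℝ N' (seq p₀ n, p₀) (fderiv ℝ (fun p => seq p n) p₀ w, w) := by
          rw [heq, hcomp.fderiv]; rfl
        have hsplit : fderiv ℝ N' (seq p₀ n, p₀) (fderiv ℝ (fun p => seq p n) p₀ w, w)
            = fderiv ℝ N' (seq p₀ n, p₀) (fderiv ℝ (fun p => seq p n) p₀ w, 0)
              + fderiv ℝ N' (seq p₀ n, p₀) (0, w) := by
          rw [← map_add]
          congr 1
          simp [Prod.ext_iff]
        rw [h1, hD, hsplit, dotProduct_add, ← hpart1, ← hpart2,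
          ← hlam n hlt, hmu n hlt]
        ring
  have := key NN 0 (by omega)
  rw [this]
  have h0 : (fun p => seq p 0) = fun _ => u0 := by funext p; exact hseq0 p
  rw [h0]
  simp
end

section
/- Let F : ℝ^m → ℝ^m be differentiable and consider one step of an s-stage explicit Runge–Kutta method with coefficients (a_{ij}) strictly lower triangular and weights b_i: U_i = u_n + h Σ_{j<i} a_{ij} F(U_j), u_{n+1} = u_n + h Σ_i b_i F(U_i). Then for a differentiable ψ : ℝ^m → ℝ, the gradient ∇_{u_n} ψ(u_{n+1}) equals λ_n, where λ_{n+1} = ∇ψ(u_{n+1}), the stage adjoints satisfy λ^{(i)} = h (DF(U_i))ᵀ (b_i λ_{n+1} + Σ_{j>i} a_{ji} λ^{(j)}) for i = s,…,1, and λ_n = λ_{n+1} + Σ_{j=1}^s λ^{(j)}. -/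
open Matrix

/-- Discrete adjoint of one step of an `s`-stage explicit Runge–Kutta method:
the backward stage recursion produces the exact derivative of `ψ(u_{n+1})`
with respect to the initial state `u_n` of the step. -/
theorem erk_discrete_adjoint
    (m s : ℕ) (a : Fin s → Fin s → ℝ) (b : Fin s → ℝ)
    (hlow : ∀ i j : Fin s, i ≤ j → a i j = 0)
    (h : ℝ) (hh : 0 < h)
    (F : (Fin m → ℝ) → (Fin m → ℝ)) (hF : Differentiable ℝ F)
    (U : (Fin m → ℝ) → Fin s → (Fin m → ℝ))
    (hU : ∀ v i, U v i = v + h • ∑ j, a i j • F (U v j))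
    (step : (Fin m → ℝ) → (Fin m → ℝ))
    (hstep : ∀ v, step v = v + h • ∑ i, b i • F (U v i))
    (ψ : (Fin m → ℝ) → ℝ) (hψ : Differentiable ℝ ψ)
    (un : Fin m → ℝ)
    (lam1 : Fin m → ℝ)
    (hlam1 : ∀ v : Fin m → ℝ, fderiv ℝ ψ (step un) v = dotProduct lam1 v)
    (lamS : Fin s → (Fin m → ℝ))
    (hlamS : ∀ i : Fin s, ∀ v : Fin m → ℝ,
      dotProduct (lamS i) v
        = h * dotProduct (b i • lam1 + ∑ j, a j i • lamS j)
            (fderiv ℝ F (U un i) v)) :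
    ∀ v : Fin m → ℝ,
      fderiv ℝ (fun w => ψ (step w)) un v
        = dotProduct (lam1 + ∑ j, lamS j) v := by
  -- Differentiability of the stages at `un`, by strong induction on the stage index.
  have hdiffU : ∀ i : Fin s, DifferentiableAt ℝ (fun v => U v i) un := by
    have H : ∀ n, ∀ i : Fin s, (i : ℕ) < n → DifferentiableAt ℝ (fun v => U v i) un := by
      intro n
      induction n with
      | zero => intro i hi; omega
      | succ n ih =>
        intro i hi
        have hfun : (fun v => U v i) = fun v => v + h • ∑ j, a i j • F (U v j) :=
          funext fun v => hU v i
        rw [hfun]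
        refine DifferentiableAt.add differentiableAt_fun_id (DifferentiableAt.const_smul ?_ h)
        refine DifferentiableAt.fun_sum fun j _ => ?_
        by_cases hj : (j : ℕ) < (i : ℕ)
        · exact (DifferentiableAt.comp un (hF (U un j)) (ih j (by omega))).const_smul (a i j)
        · have hz : a i j = 0 := hlow i j (Fin.le_def.mpr (by omega))
          simp only [hz, zero_smul]
          exact differentiableAt_const 0
    exact fun i => H s i i.isLt
  -- Derivative of the stages.
  have hfdU : ∀ i : Fin s, HasFDerivAt (fun v => U v i)
      (ContinuousLinearMap.id ℝ (Fin m → ℝ)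
        + h • ∑ j, a i j • ((fderiv ℝ F (U un j)).comp (fderiv ℝ (fun v => U v j) un))) un := by
    intro i
    have hfun : (fun v => U v i) = fun v => v + h • ∑ j, a i j • F (U v j) :=
      funext fun v => hU v i
    rw [hfun]
    refine HasFDerivAt.add (hasFDerivAt_id un) (HasFDerivAt.const_smul ?_ h)
    refine HasFDerivAt.fun_sum fun j _ => ?_
    exact (((hF (U un j)).hasFDerivAt.comp un (hdiffU j).hasFDerivAt)).const_smul (a i j)
  intro w
  set Dw : Fin s → (Fin m → ℝ) := fun i => fderiv ℝ (fun v => U v i) un w with hDw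
  set K : Fin s → (Fin m → ℝ) := fun i => fderiv ℝ F (U un i) (Dw i) with hK
  have hDr : ∀ i, Dw i = w + h • ∑ j, a i j • K j := by
    intro i
    have := (hfdU i).fderiv
    calc Dw i = fderiv ℝ (fun v => U v i) un w := rfl
      _ = _ := by rw [this]; simp [ContinuousLinearMap.sum_apply, hK, hDw]
  -- Derivative of the step map.
  have hfdstep : HasFDerivAt step
      (ContinuousLinearMap.id ℝ (Fin m → ℝ)
        + h • ∑ i, b i • ((fderiv ℝ F (U un i)).comp (fderiv ℝ (fun v => U v i) un))) un := by
    have hfun : step = fun v => v + h • ∑ i, b i • F (U v i) := funext hstep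
    rw [hfun]
    refine HasFDerivAt.add (hasFDerivAt_id un) (HasFDerivAt.const_smul ?_ h)
    refine HasFDerivAt.fun_sum fun i _ => ?_
    exact (((hF (U un i)).hasFDerivAt.comp un (hdiffU i).hasFDerivAt)).const_smul (b i)
  have hstepw : fderiv ℝ step un w = w + h • ∑ i, b i • K i := by
    rw [hfdstep.fderiv]
    simp [ContinuousLinearMap.sum_apply, hK, hDw]
  -- dot product helper lemmas
  have dsum : ∀ (u : Fin m → ℝ) (f : Fin s → Fin m → ℝ),
      dotProduct u (∑ j, f j) = ∑ j, dotProduct u (f j) := by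
    intro u f
    simp only [dotProduct, Finset.sum_apply, Finset.mul_sum]
    exact Finset.sum_comm
  have sumd : ∀ (f : Fin s → Fin m → ℝ) (u : Fin m → ℝ),
      dotProduct (∑ j, f j) u = ∑ j, dotProduct (f j) u := by
    intro f u
    simp only [dotProduct, Finset.sum_apply, Finset.sum_mul]
    exact Finset.sum_comm
  -- key summation identity
  have keysum : ∑ i, dotProduct (lamS i) w = h * ∑ i, b i * dotProduct lam1 (K i) := by
    have e1 : ∀ i, dotProduct (lamS i) (Dw i)
        = dotProduct (lamS i) w + h * ∑ j, a i j * dotProduct (lamS i) (K j) := by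
      intro i
      rw [hDr i, dotProduct_add, dotProduct_smul, dsum]
      simp [dotProduct_smul, smul_eq_mul]
    have e2 : ∀ i, dotProduct (lamS i) (Dw i)
        = h * (b i * dotProduct lam1 (K i) + ∑ j, a j i * dotProduct (lamS j) (K i)) := by
      intro i
      rw [hlamS i (Dw i), add_dotProduct, smul_dotProduct, sumd]
      simp [smul_dotProduct, smul_eq_mul, hK]
    have e3 : ∑ i, (dotProduct (lamS i) w + h * ∑ j, a i j * dotProduct (lamS i) (K j))
        = ∑ i, h * (b i * dotProduct lam1 (K i) + ∑ j, a j i * dotProduct (lamS j) (K i)) := by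
      rw [← Finset.sum_congr rfl fun i _ => e1 i, Finset.sum_congr rfl fun i _ => e2 i]
    have e4 : ∑ i : Fin s, ∑ j : Fin s, a i j * dotProduct (lamS i) (K j)
        = ∑ i : Fin s, ∑ j : Fin s, a j i * dotProduct (lamS j) (K i) := Finset.sum_comm
    simp only [Finset.sum_add_distrib, mul_add, ← Finset.mul_sum] at e3
    rw [e4] at e3
    linarith [e3]
  -- chain rule and conclusion
  have hcomp : fderiv ℝ (fun w => ψ (step w)) un w
      = fderiv ℝ ψ (step un) (fderiv ℝ step un w) := by
    have := fderiv_comp un (hψ (step un)) hfdstep.differentiableAt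
    rw [show (fun w => ψ (step w)) = ψ ∘ step from rfl, this]
    rfl
  rw [hcomp, hlam1, hstepw, dotProduct_add, dotProduct_smul, dsum, add_dotProduct, sumd]
  have : ∑ j, dotProduct lam1 (b j • K j) = ∑ j, b j * dotProduct lam1 (K j) := by
    refine Finset.sum_congr rfl fun j _ => ?_
    rw [dotProduct_smul]; rfl
  rw [this]
  simp only [smul_eq_mul, Finset.mul_sum] at keysum ⊢
  linarith [keysum]
end
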